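/- The limit as n → ∞ of C(⌊(1/2)(1 + 1/√5)(n+1)⌋, ⌈(5n−1−√(5(n+1)²−4))/10⌉) · C(⌊(5n+1+√(5(n+1)²−4))/10⌋, ⌊(1/2)(1 − 1/√5)(n+1)⌋) · n / φ^(2n) equals φ²√5/(2π), where φ = (1+√5)/2. In particular, the maximum number of embeddings of a single LCS in two sequences of length n grows as (φ²)^n / n times the constant φ²√5/(2π) ≈ 0.932, and φ² ≈ 2.62. -/

import Mathlib

open Filter Real
open Topology


noncomputable section
namespace Stmt15

def κ : ℝ := 1 / Real.sqrt 5
def αc : ℝ := (1 + κ) / 2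
def βc : ℝ := 1 - αc
def φc : ℝ := (1 + Real.sqrt 5) / 2

lemma sqrt5_pos : (0:ℝ) < Real.sqrt 5 := Real.sqrt_pos.mpr (by norm_num)
lemma sqrt5_sq : Real.sqrt 5 ^ 2 = 5 := Real.sq_sqrt (by norm_num)
lemma sqrt5_lt : Real.sqrt 5 < 2.2361 := by
  nlinarith [sqrt5_sq, sqrt5_pos]
lemma sqrt5_gt : 2.236 < Real.sqrt 5 := by
  nlinarith [sqrt5_sq, sqrt5_pos]

lemma κ_pos : 0 < κ := by unfold κ; positivity
lemma κ_lt : κ < 0.4473 := by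
  rw [κ, div_lt_iff₀ sqrt5_pos]; nlinarith [sqrt5_gt]
lemma κ_gt : 0.447 < κ := by
  rw [κ, lt_div_iff₀ sqrt5_pos]; nlinarith [sqrt5_lt]
lemma αc_pos : 0 < αc := by unfold αc; linarith [κ_pos]
lemma αc_lt : αc < 0.7237 := by unfold αc; linarith [κ_lt]
lemma αc_gt : 0.7235 < αc := by unfold αc; linarith [κ_gt]
lemma βc_pos : 0 < βc := by unfold βc; linarith [αc_lt]
lemma βc_lt : βc < 0.2765 := by unfold βc; linarith [αc_gt]
lemma βc_gt : 0.2763 < βc := by unfold βc; linarith [αc_lt]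
lemma φc_pos : 0 < φc := by unfold φc; linarith [sqrt5_pos]
lemma φc_ne : φc ≠ 0 := ne_of_gt φc_pos

lemma αc_eq : αc = φc * κ := by
  rw [αc, φc, κ]
  field_simp
  nlinarith [sqrt5_sq]
lemma βc_eq : βc = κ / φc := by
  rw [eq_div_iff φc_ne, βc, αc, φc, κ]
  have h5 := sqrt5_sq
  have h0 := sqrt5_pos
  field_simp
  nlinarith

/-- basic log inequality lemmas for the error term -/
lemma T_nonneg {x y : ℝ} (hx : 0 < x) (hy : 0 < y) :
    x - y ≤ x * Real.log (x / y) := by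
  have h := Real.log_le_sub_one_of_pos (show 0 < y / x by positivity)
  have hlog : Real.log (y / x) = - Real.log (x / y) := by
    rw [← Real.log_inv]; congr 1; field_simp
  rw [hlog] at h
  have := mul_le_mul_of_nonneg_left h hx.le
  have hyx : x * (y / x - 1) = y - x := by field_simp
  nlinarith
lemma T_le {x y : ℝ} (hx : 0 < x) (hy : 0 < y) :
    x * Real.log (x / y) - (x - y) ≤ (x - y) ^ 2 / y := by
  have h := Real.log_le_sub_one_of_pos (show 0 < x / y by positivity)
  have := mul_le_mul_of_nonneg_left h hx.le
  have h2 : x * (x / y - 1) - (x - y) = (x - y) ^ 2 / y := by field_simp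
  nlinarith

lemma fact_eq {m : ℕ} (hm : m ≠ 0) :
    (Nat.factorial m : ℝ) = Stirling.stirlingSeq m * (Real.sqrt (2 * m) * ((m : ℝ) / Real.exp 1) ^ m) := by
  have hm' : (0:ℝ) < m := by exact_mod_cast Nat.pos_of_ne_zero hm
  have hd : Real.sqrt (2 * m) * ((m : ℝ) / Real.exp 1) ^ m ≠ 0 := by positivity
  rw [Stirling.stirlingSeq, div_mul_cancel₀ _ hd]

lemma stirling_pos {m : ℕ} (hm : m ≠ 0) : 0 < Stirling.stirlingSeq m := by
  obtain ⟨j, rfl⟩ := Nat.exists_eq_succ_of_ne_zero hm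
  exact Stirling.stirlingSeq'_pos j

lemma log_fact {m : ℕ} (hm : m ≠ 0) :
    Real.log (Nat.factorial m : ℝ) =
      Real.log (Stirling.stirlingSeq m) + 1 / 2 * Real.log (2 * m) + m * (Real.log m - 1) := by
  have hm' : (0:ℝ) < m := by exact_mod_cast Nat.pos_of_ne_zero hm
  have h := Stirling.log_stirlingSeq_formula m
  have h2 : Real.log ((m : ℝ) / Real.exp 1) = Real.log m - 1 := by
    rw [Real.log_div hm'.ne' (Real.exp_ne_zero 1), Real.log_exp]
  rw [h2] at h
  linarith

lemma key_identity (k p q n : ℕ) (hk : k ≠ 0) (hp : p ≠ 0) (hq : q ≠ 0)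
    (hn : k + p + q = n) :
    (((k + q).choose q * (k + p).choose p : ℕ) : ℝ) * n / φc ^ (2 * n) =
      (Stirling.stirlingSeq (k + q) * Stirling.stirlingSeq (k + p) /
        (Stirling.stirlingSeq p * Stirling.stirlingSeq q * Stirling.stirlingSeq k ^ 2)) *
      ((n * (Real.sqrt (k + q) * Real.sqrt (k + p))) /
        (2 * k * (Real.sqrt p * Real.sqrt q))) *
      Real.exp ((k + q : ℝ) * Real.log ((k + q : ℝ) / (αc * n)) +
        (k + p : ℝ) * Real.log ((k + p : ℝ) / (αc * n)) +
        (p : ℝ) * Real.log (βc * n / p) + (q : ℝ) * Real.log (βc * n / q) +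
        2 * (k : ℝ) * Real.log (κ * n / k)) := by
  subst hn
  have hk' : (0:ℝ) < k := by exact_mod_cast Nat.pos_of_ne_zero hk
  have hp' : (0:ℝ) < p := by exact_mod_cast Nat.pos_of_ne_zero hp
  have hq' : (0:ℝ) < q := by exact_mod_cast Nat.pos_of_ne_zero hq
  have hn' : (0:ℝ) < ((k + p + q : ℕ) : ℝ) := by
    push_cast; linarith
  have hkq : (0:ℝ) < ((k + q : ℕ) : ℝ) := by push_cast; linarith
  have hkp : (0:ℝ) < ((k + p : ℕ) : ℝ) := by push_cast; linarith
  have hSkq := stirling_pos (show k + q ≠ 0 by omega)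
  have hSkp := stirling_pos (show k + p ≠ 0 by omega)
  have hSk := stirling_pos hk
  have hSp := stirling_pos hp
  have hSq := stirling_pos hq
  have hc1 : q ≤ k + q := by omega
  have hc2 : p ≤ k + p := by omega
  rw [Nat.cast_mul, Nat.cast_choose ℝ hc1, Nat.cast_choose ℝ hc2,
    Nat.add_sub_cancel, Nat.add_sub_cancel]
  have hfq := Nat.factorial_pos q
  have hfp := Nat.factorial_pos p
  have hfk := Nat.factorial_pos k
  have hfkq := Nat.factorial_pos (k + q)
  have hfkp := Nat.factorial_pos (k + p)
  have hfq' : (0:ℝ) < (Nat.factorial q : ℝ) := by exact_mod_cast hfq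
  have hfp' : (0:ℝ) < (Nat.factorial p : ℝ) := by exact_mod_cast hfp
  have hfk' : (0:ℝ) < (Nat.factorial k : ℝ) := by exact_mod_cast hfk
  have hfkq' : (0:ℝ) < (Nat.factorial (k+q) : ℝ) := by exact_mod_cast hfkq
  have hfkp' : (0:ℝ) < (Nat.factorial (k+p) : ℝ) := by exact_mod_cast hfkp
  have hφpow : (0:ℝ) < φc ^ (2 * (k + p + q)) := pow_pos φc_pos _
  have hLpos : 0 < (Nat.factorial (k+q) : ℝ) / ((Nat.factorial q : ℝ) * (Nat.factorial k : ℝ)) *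
      ((Nat.factorial (k+p) : ℝ) / ((Nat.factorial p : ℝ) * (Nat.factorial k : ℝ))) *
      ((k + p + q : ℕ) : ℝ) / φc ^ (2 * (k + p + q)) := by positivity
  have hRpos : 0 < (Stirling.stirlingSeq (k + q) * Stirling.stirlingSeq (k + p) /
        (Stirling.stirlingSeq p * Stirling.stirlingSeq q * Stirling.stirlingSeq k ^ 2)) *
      ((((k + p + q : ℕ) : ℝ) * (Real.sqrt ((k : ℝ) + (q : ℝ)) * Real.sqrt ((k : ℝ) + (p : ℝ)))) /
        (2 * (k : ℝ) * (Real.sqrt (p : ℝ) * Real.sqrt (q : ℝ)))) *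
      Real.exp ((k + q : ℝ) * Real.log ((k + q : ℝ) / (αc * ((k + p + q : ℕ) : ℝ))) +
        (k + p : ℝ) * Real.log ((k + p : ℝ) / (αc * ((k + p + q : ℕ) : ℝ))) +
        (p : ℝ) * Real.log (βc * ((k + p + q : ℕ) : ℝ) / p) +
        (q : ℝ) * Real.log (βc * ((k + p + q : ℕ) : ℝ) / q) +
        2 * (k : ℝ) * Real.log (κ * ((k + p + q : ℕ) : ℝ) / k)) := by
    have h1 : (0:ℝ) < Real.sqrt ((k : ℝ) + (q : ℝ)) := Real.sqrt_pos.mpr (by push_cast at hkq ⊢; linarith)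
    have h2 : (0:ℝ) < Real.sqrt ((k : ℝ) + (p : ℝ)) := Real.sqrt_pos.mpr (by push_cast at hkp ⊢; linarith)
    have h3 : (0:ℝ) < Real.sqrt (p : ℝ) := Real.sqrt_pos.mpr hp'
    have h4 : (0:ℝ) < Real.sqrt (q : ℝ) := Real.sqrt_pos.mpr hq'
    positivity
  rw [← Real.exp_log hLpos, ← Real.exp_log hRpos]
  congr 1
  have hαn : (0:ℝ) < αc * ((k + p + q : ℕ) : ℝ) := mul_pos αc_pos hn'
  have hβn : (0:ℝ) < βc * ((k + p + q : ℕ) : ℝ) := mul_pos βc_pos hn'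
  have hκn : (0:ℝ) < κ * ((k + p + q : ℕ) : ℝ) := mul_pos κ_pos hn'
  rw [Real.log_div (by positivity) (by positivity), Real.log_mul (by positivity) (by positivity),
    Real.log_mul (by positivity) (by positivity),
    Real.log_div (by positivity) (by positivity), Real.log_div (by positivity) (by positivity),
    Real.log_mul (by positivity) (by positivity), Real.log_mul (by positivity) (by positivity),
    Real.log_pow,
    Real.log_mul (by positivity) (by positivity), Real.log_mul (by positivity) (by positivity),
    Real.log_div (by positivity) (by positivity),
    Real.log_mul (by positivity) (by positivity), Real.log_mul (by positivity) (by positivity),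
    Real.log_mul (by positivity) (by positivity),
    Real.log_exp, Real.log_pow,
    log_fact (show k + q ≠ 0 by omega), log_fact (show k + p ≠ 0 by omega),
    log_fact hp, log_fact hq, log_fact hk]
  have hkq2 : (0:ℝ) < (k:ℝ) + q := by linarith
  have hkp2 : (0:ℝ) < (k:ℝ) + p := by linarith
  have hs1 : (0:ℝ) < Real.sqrt ((k:ℝ) + q) := Real.sqrt_pos.mpr hkq2
  have hs2 : (0:ℝ) < Real.sqrt ((k:ℝ) + p) := Real.sqrt_pos.mpr hkp2
  have hs3 : (0:ℝ) < Real.sqrt (p:ℝ) := Real.sqrt_pos.mpr hp'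
  have hs4 : (0:ℝ) < Real.sqrt (q:ℝ) := Real.sqrt_pos.mpr hq'
  have h2 : (2:ℝ) ≠ 0 := by norm_num
  rw [Real.log_mul h2 hkq.ne', Real.log_mul h2 hq'.ne', Real.log_mul h2 hk'.ne',
    Real.log_mul h2 hkp.ne', Real.log_mul h2 hp'.ne',
    Real.log_div (mul_pos hn' (mul_pos hs1 hs2)).ne'
      (mul_pos (mul_pos two_pos hk') (mul_pos hs3 hs4)).ne',
    Real.log_mul hn'.ne' (mul_pos hs1 hs2).ne', Real.log_mul hs1.ne' hs2.ne',
    Real.log_mul (mul_pos two_pos hk').ne' (mul_pos hs3 hs4).ne',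
    Real.log_mul h2 hk'.ne', Real.log_mul hs3.ne' hs4.ne',
    Real.log_sqrt hkq2.le, Real.log_sqrt hkp2.le, Real.log_sqrt hp'.le, Real.log_sqrt hq'.le,
    Real.log_div hkq2.ne' hαn.ne', Real.log_div hkp2.ne' hαn.ne',
    Real.log_div hβn.ne' hp'.ne', Real.log_div hβn.ne' hq'.ne',
    Real.log_div hκn.ne' hk'.ne',
    Real.log_mul αc_pos.ne' hn'.ne', Real.log_mul βc_pos.ne' hn'.ne',
    Real.log_mul κ_pos.ne' hn'.ne',
    αc_eq, βc_eq, Real.log_mul φc_ne κ_pos.ne', Real.log_div κ_pos.ne' φc_ne]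
  push_cast
  ring

/-- the floor sequences -/
def A (n : ℕ) : ℕ := ⌊(1 / 2 : ℝ) * (1 + 1 / Real.sqrt 5) * ((n : ℝ) + 1)⌋₊
def Cc (n : ℕ) : ℕ :=
  ⌊(5 * (n : ℝ) + 1 + Real.sqrt (5 * ((n : ℝ) + 1) ^ 2 - 4)) / 10⌋₊
def P (n : ℕ) : ℕ := n - A n
def Q (n : ℕ) : ℕ := n - Cc n
def K (n : ℕ) : ℕ := A n + Cc n - n

lemma irr5 : Irrational (Real.sqrt 5) := by
  have := (by norm_num : Nat.Prime 5).irrational_sqrt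
  simpa using this

lemma hα5 : αc = 1 / 2 + Real.sqrt 5 / 10 := by
  rw [αc, κ]
  have h5 := sqrt5_sq
  have h0 := sqrt5_pos
  field_simp
  nlinarith

lemma hargA (n : ℕ) : (1 / 2 : ℝ) * (1 + 1 / Real.sqrt 5) * ((n : ℝ) + 1) = αc * ((n:ℝ) + 1) := by
  rw [αc, κ]; ring

lemma bA {n : ℕ} (hn : 1 ≤ n) : αc * n - 1 ≤ (A n : ℝ) ∧ (A n : ℝ) ≤ αc * n + 1 := by
  have harg : (0:ℝ) ≤ (1 / 2 : ℝ) * (1 + 1 / Real.sqrt 5) * ((n : ℝ) + 1) := by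
    rw [hargA]; exact mul_nonneg αc_pos.le (by positivity)
  have h1 := Nat.floor_le harg
  have h2 := Nat.lt_floor_add_one ((1 / 2 : ℝ) * (1 + 1 / Real.sqrt 5) * ((n : ℝ) + 1))
  have hαl := αc_lt; have hαp := αc_pos
  have hexp : αc * ((n:ℝ)+1) = αc * n + αc := by ring
  have he := hargA n
  unfold A
  constructor
  · linarith
  · linarith

lemma s_bounds {n : ℕ} (hn : 1 ≤ n) :
    Real.sqrt 5 * ((n:ℝ)+1) - 1 ≤ Real.sqrt (5 * ((n : ℝ) + 1) ^ 2 - 4) ∧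
    Real.sqrt (5 * ((n : ℝ) + 1) ^ 2 - 4) ≤ Real.sqrt 5 * ((n:ℝ)+1) := by
  have hn' : (1:ℝ) ≤ n := by exact_mod_cast hn
  have h5 := sqrt5_sq
  have h0 := sqrt5_pos
  have hg := sqrt5_gt
  constructor
  · have hx : (0:ℝ) ≤ Real.sqrt 5 * ((n:ℝ)+1) - 1 := by nlinarith
    have key : (Real.sqrt 5 * ((n:ℝ)+1) - 1)^2 ≤ 5 * ((n : ℝ) + 1) ^ 2 - 4 := by nlinarith
    calc Real.sqrt 5 * ((n:ℝ)+1) - 1 = Real.sqrt ((Real.sqrt 5 * ((n:ℝ)+1) - 1)^2) :=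
          (Real.sqrt_sq hx).symm
      _ ≤ _ := Real.sqrt_le_sqrt key
  · calc Real.sqrt (5 * ((n : ℝ) + 1) ^ 2 - 4) ≤ Real.sqrt ((Real.sqrt 5 * ((n:ℝ)+1))^2) :=
          Real.sqrt_le_sqrt (by nlinarith)
      _ = Real.sqrt 5 * ((n:ℝ)+1) := Real.sqrt_sq (by positivity)

lemma bC {n : ℕ} (hn : 1 ≤ n) : αc * n - 1 ≤ (Cc n : ℝ) ∧ (Cc n : ℝ) ≤ αc * n + 1 := by
  obtain ⟨hs1, hs2⟩ := s_bounds hn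
  have hn' : (1:ℝ) ≤ n := by exact_mod_cast hn
  have h0 := sqrt5_pos
  have hlt := sqrt5_lt
  have hgt := sqrt5_gt
  have harg : (0:ℝ) ≤ (5 * (n : ℝ) + 1 + Real.sqrt (5 * ((n : ℝ) + 1) ^ 2 - 4)) / 10 := by
    have : (0:ℝ) ≤ Real.sqrt (5 * ((n : ℝ) + 1) ^ 2 - 4) := Real.sqrt_nonneg _
    linarith
  have h1 := Nat.floor_le harg
  have h2 := Nat.lt_floor_add_one ((5 * (n : ℝ) + 1 + Real.sqrt (5 * ((n : ℝ) + 1) ^ 2 - 4)) / 10)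
  have hα := hα5
  have hm1 : Real.sqrt 5 * ((n:ℝ)+1) ≤ 2.2361 * ((n:ℝ)+1) :=
    mul_le_mul_of_nonneg_right sqrt5_lt.le (by positivity)
  have hm2 : 2.236 * ((n:ℝ)+1) ≤ Real.sqrt 5 * ((n:ℝ)+1) :=
    mul_le_mul_of_nonneg_right sqrt5_gt.le (by positivity)
  constructor
  · unfold Cc; nlinarith
  · unfold Cc; nlinarith

/-- all the natural-number facts needed, for n ≥ 100 -/
lemma facts {n : ℕ} (hn : 100 ≤ n) :
    A n ≤ n ∧ Cc n ≤ n ∧ n ≤ A n + Cc n ∧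
    K n ≠ 0 ∧ P n ≠ 0 ∧ Q n ≠ 0 ∧
    K n + P n + Q n = n ∧ A n = K n + Q n ∧ Cc n = K n + P n ∧
    ((K n : ℝ) = (A n : ℝ) + (Cc n : ℝ) - n ∧ (P n : ℝ) = (n : ℝ) - A n ∧
      (Q n : ℝ) = (n : ℝ) - Cc n) := by
  have hn1 : 1 ≤ n := by omega
  obtain ⟨hA1, hA2⟩ := bA hn1
  obtain ⟨hC1, hC2⟩ := bC hn1
  have hn' : (100:ℝ) ≤ n := by exact_mod_cast hn
  have hαl := αc_lt; have hαg := αc_gt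
  have hu : αc * (n:ℝ) ≤ 0.7237 * n := mul_le_mul_of_nonneg_right αc_lt.le (by positivity)
  have hl : (0.7235:ℝ) * n ≤ αc * n := mul_le_mul_of_nonneg_right αc_gt.le (by positivity)
  have hAn : A n ≤ n := by
    have : (A n : ℝ) ≤ n := by linarith
    exact_mod_cast this
  have hCn : Cc n ≤ n := by
    have : (Cc n : ℝ) ≤ n := by linarith
    exact_mod_cast this
  have hACn : n ≤ A n + Cc n := by
    have : (n : ℝ) ≤ (A n : ℝ) + Cc n := by linarith
    exact_mod_cast this
  have hK0 : K n ≠ 0 := by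
    have : (n : ℝ) + 1 ≤ (A n : ℝ) + Cc n := by linarith
    have h : n + 1 ≤ A n + Cc n := by exact_mod_cast this
    unfold K; omega
  have hP0 : P n ≠ 0 := by
    have : (A n : ℝ) + 1 ≤ n := by linarith
    have h : A n + 1 ≤ n := by exact_mod_cast this
    unfold P; omega
  have hQ0 : Q n ≠ 0 := by
    have : (Cc n : ℝ) + 1 ≤ n := by linarith
    have h : Cc n + 1 ≤ n := by exact_mod_cast this
    unfold Q; omega
  refine ⟨hAn, hCn, hACn, hK0, hP0, hQ0, by unfold K P Q; omega, by unfold K Q; omega,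
    by unfold K P; omega, ?_, ?_, ?_⟩
  · have h : K n + n = A n + Cc n := by unfold K; omega
    have h2 : ((K n + n : ℕ) : ℝ) = ((A n + Cc n : ℕ) : ℝ) := by exact_mod_cast h
    push_cast at h2; linarith
  · have h : P n + A n = n := by unfold P; omega
    have h2 : ((P n + A n : ℕ) : ℝ) = ((n : ℕ) : ℝ) := by exact_mod_cast h
    push_cast at h2; linarith
  · have h : Q n + Cc n = n := by unfold Q; omega
    have h2 : ((Q n + Cc n : ℕ) : ℝ) = ((n : ℕ) : ℝ) := by exact_mod_cast h
    push_cast at h2; linarith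

/-- ceiling identity -/
lemma ceilQ {n : ℕ} (hn : 100 ≤ n) :
    ⌈(5 * (n : ℝ) - 1 - Real.sqrt (5 * ((n : ℝ) + 1) ^ 2 - 4)) / 10⌉₊ = n - Cc n := by
  have hn1 : 1 ≤ n := by omega
  obtain ⟨hs1, hs2⟩ := s_bounds hn1
  have hn' : (100:ℝ) ≤ n := by exact_mod_cast hn
  have hlt := sqrt5_lt
  set x : ℝ := (5 * (n : ℝ) - 1 - Real.sqrt (5 * ((n : ℝ) + 1) ^ 2 - 4)) / 10 with hx
  have hm1 : Real.sqrt 5 * ((n:ℝ)+1) ≤ 2.2361 * ((n:ℝ)+1) :=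
    mul_le_mul_of_nonneg_right sqrt5_lt.le (by positivity)
  have hx0 : 0 ≤ x := by rw [hx]; nlinarith
  have hnx : (n : ℝ) - x = (5 * (n : ℝ) + 1 + Real.sqrt (5 * ((n : ℝ) + 1) ^ 2 - 4)) / 10 := by
    rw [hx]; ring
  have hint : ⌊(n : ℝ) - x⌋ = (n : ℤ) - ⌈x⌉ := by
    have : (n : ℝ) - x = -x + ((n : ℤ) : ℝ) := by push_cast; ring
    rw [this, Int.floor_add_intCast, Int.floor_neg]; ring
  have hC : Cc n = (⌊(n : ℝ) - x⌋).toNat := by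
    rw [Cc, ← hnx, Int.floor_toNat]
  have hceil : (⌈x⌉₊ : ℤ) = ⌈x⌉ := by
    rw [← Int.ceil_toNat, Int.toNat_of_nonneg (Int.ceil_nonneg hx0)]
  have hcnn : (0:ℤ) ≤ ⌈x⌉ := Int.ceil_nonneg hx0
  have hfnn : (0:ℤ) ≤ ⌊(n : ℝ) - x⌋ := by
    rw [hint]
    have : ⌈x⌉ ≤ (n : ℤ) := by
      have : x ≤ (n : ℝ) := by
        rw [hx]
        have hsnn : (0:ℝ) ≤ Real.sqrt (5 * ((n : ℝ) + 1) ^ 2 - 4) := Real.sqrt_nonneg _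
        nlinarith
      exact Int.ceil_le.mpr (by exact_mod_cast this)
    omega
  have : (⌈x⌉₊ : ℤ) = (n : ℤ) - (Cc n : ℤ) := by
    rw [hceil, hC]
    rw [Int.toNat_of_nonneg hfnn, hint]
    omega
  have hCn : Cc n ≤ n := by
    have h := this
    have : (0:ℤ) ≤ (n : ℤ) - (Cc n : ℤ) := by rw [← h]; exact Int.natCast_nonneg _
    omega
  omega

/-- floor identity for the second lower index -/
lemma floorP {n : ℕ} (hn : 100 ≤ n) :
    ⌊(1 / 2 : ℝ) * (1 - 1 / Real.sqrt 5) * ((n : ℝ) + 1)⌋₊ = n - A n := by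
  have hn1 : 1 ≤ n := by omega
  obtain ⟨hA1, hA2⟩ := bA hn1
  have hn' : (100:ℝ) ≤ n := by exact_mod_cast hn
  have h0 := sqrt5_pos
  have hαl := αc_lt
  -- the dual argument equals (1 - αc)(n+1) = βc (n+1)
  have harg : (1 / 2 : ℝ) * (1 - 1 / Real.sqrt 5) * ((n : ℝ) + 1) = βc * ((n:ℝ) + 1) := by
    rw [βc, αc, κ]; ring
  -- A n < αc (n+1) strictly (irrationality)
  have hAstrict : (A n : ℝ) < αc * ((n:ℝ)+1) := by
    have harg : (0:ℝ) ≤ (1 / 2 : ℝ) * (1 + 1 / Real.sqrt 5) * ((n : ℝ) + 1) := by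
      rw [hargA]; exact mul_nonneg αc_pos.le (by positivity)
    have hle : (A n : ℝ) ≤ αc * ((n:ℝ)+1) := (Nat.floor_le harg).trans_eq (hargA n)
    rcases lt_or_eq_of_le hle with h | h
    · exact h
    · exfalso
      -- αc (n+1) = A n would make √5 rational
      have h5 : Real.sqrt 5 * ((2 * A n : ℝ) - ((n:ℝ)+1)) = (n:ℝ) + 1 := by
        rw [hα5] at h
        nlinarith [sqrt5_sq]
      have hden : (2 * (A n : ℝ) - ((n:ℝ)+1)) ≠ 0 := by
        intro hzero
        rw [hzero, mul_zero] at h5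
        have : (0:ℝ) < (n:ℝ) + 1 := by positivity
        linarith
      have : Real.sqrt 5 = ((n:ℝ)+1) / (2 * (A n : ℝ) - ((n:ℝ)+1)) := by
        field_simp at h5 ⊢
        linarith [h5]
      apply irr5
      refine ⟨((n+1 : ℚ)) / (2 * (A n : ℚ) - ((n:ℚ)+1)), ?_⟩
      rw [this]
      push_cast
      ring
  have hA3 : αc * ((n:ℝ)+1) < (A n : ℝ) + 1 := by
    have h := Nat.lt_floor_add_one ((1 / 2 : ℝ) * (1 + 1 / Real.sqrt 5) * ((n : ℝ) + 1))
    calc αc * ((n:ℝ)+1) = (1 / 2 : ℝ) * (1 + 1 / Real.sqrt 5) * ((n : ℝ) + 1) := (hargA n).symm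
      _ < (A n : ℝ) + 1 := h
  have hfloor : ⌊βc * ((n:ℝ) + 1)⌋₊ = n - A n := by
    have hβpos : (0:ℝ) ≤ βc * ((n:ℝ)+1) := mul_nonneg βc_pos.le (by positivity)
    rw [Nat.floor_eq_iff hβpos]
    have hβ : βc * ((n:ℝ)+1) = ((n:ℝ)+1) - αc * ((n:ℝ)+1) := by rw [βc]; ring
    have hu : αc * (n:ℝ) ≤ 0.7237 * n := mul_le_mul_of_nonneg_right αc_lt.le (by positivity)
    have hAn : A n ≤ n := by
      have : (A n : ℝ) ≤ n := by nlinarith [αc_gt]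
      exact_mod_cast this
    have hcast : ((n - A n : ℕ) : ℝ) = (n : ℝ) - A n := by
      push_cast [Nat.cast_sub hAn]; ring
    constructor
    · rw [hcast]; linarith
    · rw [hcast]; linarith
  rw [harg, hfloor]

lemma hβα : βc = 1 - αc := rfl
lemma hκdef : κ = 1 / Real.sqrt 5 := rfl
lemma hκα' : κ = 2 * αc - 1 := by unfold αc; ring
lemma A_def (n : ℕ) : ⌊(1 / 2 : ℝ) * (1 + 1 / Real.sqrt 5) * ((n : ℝ) + 1)⌋₊ = A n := rfl
lemma Cc_def (n : ℕ) : ⌊(5 * (n : ℝ) + 1 + Real.sqrt (5 * ((n : ℝ) + 1) ^ 2 - 4)) / 10⌋₊ = Cc n := rfl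
lemma P_def (n : ℕ) : n - A n = P n := rfl
lemma Q_def (n : ℕ) : n - Cc n = Q n := rfl
attribute [irreducible] κ αc βc A Cc P Q K

/-! limit helper lemmas -/

lemma tendsto_ratio {f : ℕ → ℕ} {L : ℝ} (h : ∀ n, 100 ≤ n → |(f n : ℝ) - L * n| ≤ 3) :
    Tendsto (fun n : ℕ => (f n : ℝ) / n) atTop (𝓝 L) := by
  have h3 : Tendsto (fun n : ℕ => 3 * (1 / (n:ℝ))) atTop (𝓝 0) := by
    simpa using tendsto_one_div_atTop_nhds_zero_nat.const_mul (3:ℝ)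
  apply tendsto_of_tendsto_of_tendsto_of_le_of_le'
    (g := fun n : ℕ => L - 3 * (1/(n:ℝ))) (h := fun n : ℕ => L + 3 * (1/(n:ℝ)))
  · simpa using tendsto_const_nhds.sub h3
  · simpa using tendsto_const_nhds.add h3
  · filter_upwards [eventually_ge_atTop 100] with n hn
    have hn0 : (0:ℝ) < n := by
      have : (100:ℝ) ≤ n := by exact_mod_cast hn
      linarith
    have hb := h n hn
    rw [abs_le] at hb
    rw [sub_le_iff_le_add, div_add' _ _ _ hn0.ne', le_div_iff₀ hn0]
    have h1 : 3 * (1/(n:ℝ)) * n = 3 := by field_simp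
    nlinarith [hb.1]
  · filter_upwards [eventually_ge_atTop 100] with n hn
    have hn0 : (0:ℝ) < n := by
      have : (100:ℝ) ≤ n := by exact_mod_cast hn
      linarith
    have hb := h n hn
    rw [abs_le] at hb
    rw [div_le_iff₀ hn0]
    have h1 : 3 * (1/(n:ℝ)) * n = 3 := by field_simp
    nlinarith [hb.2]

lemma tendsto_nat_top {f : ℕ → ℕ} {c : ℝ} (hc : 0 < c)
    (h : ∀ n, 100 ≤ n → c * n - 3 ≤ (f n : ℝ)) : Tendsto f atTop atTop := by
  rw [tendsto_atTop]
  intro b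
  have ht : Tendsto (fun n : ℕ => c * (n:ℝ) - 3) atTop atTop := by
    have h1 : Tendsto (fun n : ℕ => (n:ℝ)) atTop atTop := tendsto_natCast_atTop_atTop
    have h2 := h1.const_mul_atTop hc
    exact tendsto_atTop_add_const_right atTop (-3) h2
  have hev := ht.eventually_ge_atTop (b:ℝ)
  filter_upwards [hev, eventually_ge_atTop 100] with n h1 h2
  have := h n h2
  have hb : (b:ℝ) ≤ (f n : ℝ) := le_trans h1 this
  exact_mod_cast hb

lemma Ubound {x y n : ℝ} (hn : 100 ≤ n) (hy : 0.27 * n ≤ y) (hx : 0 < x) (hd : |x - y| ≤ 3) :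
    0 ≤ x * Real.log (x / y) - (x - y) ∧ x * Real.log (x / y) - (x - y) ≤ 34 / n := by
  have hy0 : 0 < y := lt_of_lt_of_le (by linarith) hy
  constructor
  · linarith [T_nonneg hx hy0]
  · have h1 := T_le hx hy0
    have h2 : (x - y)^2 ≤ 9 := by rw [abs_le] at hd; nlinarith
    have h3 : (x - y)^2 / y ≤ 9 / y := by gcongr
    have h4 : 9 / y ≤ 34 / n := by
      rw [div_le_div_iff₀ hy0 (by linarith)]
      nlinarith
    linarith


lemma hbA : ∀ n : ℕ, 100 ≤ n → |(A n : ℝ) - αc * n| ≤ 3 := by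
  intro n hn
  obtain ⟨h1, h2⟩ := bA (show 1 ≤ n by omega)
  rw [abs_le]; constructor <;> linarith

lemma hbC : ∀ n : ℕ, 100 ≤ n → |(Cc n : ℝ) - αc * n| ≤ 3 := by
  intro n hn
  obtain ⟨h1, h2⟩ := bC (show 1 ≤ n by omega)
  rw [abs_le]; constructor <;> linarith

lemma hbP : ∀ n : ℕ, 100 ≤ n → |(P n : ℝ) - βc * n| ≤ 3 := by
  intro n hn
  obtain ⟨-, -, -, -, -, -, -, -, -, hKr, hPr, hQr⟩ := facts hn
  obtain ⟨h1, h2⟩ := bA (show 1 ≤ n by omega)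
  have hβ : βc * (n:ℝ) = (n:ℝ) - αc * n := by rw [hβα]; ring
  rw [hPr, abs_le]; constructor <;> linarith

lemma hbQ : ∀ n : ℕ, 100 ≤ n → |(Q n : ℝ) - βc * n| ≤ 3 := by
  intro n hn
  obtain ⟨-, -, -, -, -, -, -, -, -, hKr, hPr, hQr⟩ := facts hn
  obtain ⟨h1, h2⟩ := bC (show 1 ≤ n by omega)
  have hβ : βc * (n:ℝ) = (n:ℝ) - αc * n := by rw [hβα]; ring
  rw [hQr, abs_le]; constructor <;> linarith

lemma hκα : κ = 2 * αc - 1 := hκα'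

lemma hbK : ∀ n : ℕ, 100 ≤ n → |(K n : ℝ) - κ * n| ≤ 3 := by
  intro n hn
  obtain ⟨-, -, -, -, -, -, -, -, -, hKr, hPr, hQr⟩ := facts hn
  obtain ⟨h1, h2⟩ := bA (show 1 ≤ n by omega)
  obtain ⟨h3, h4⟩ := bC (show 1 ≤ n by omega)
  have hκ : κ * (n:ℝ) = αc * n + αc * n - n := by rw [hκα]; ring
  rw [hKr, abs_le]; constructor <;> linarith

/-- the eventual |G| bound -/
lemma Gbound : ∀ n : ℕ, 100 ≤ n →
    |(A n : ℝ) * Real.log ((A n : ℝ) / (αc * n)) +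
      (Cc n : ℝ) * Real.log ((Cc n : ℝ) / (αc * n)) +
      (P n : ℝ) * Real.log (βc * n / (P n : ℝ)) +
      (Q n : ℝ) * Real.log (βc * n / (Q n : ℝ)) +
      2 * (K n : ℝ) * Real.log (κ * n / (K n : ℝ))| ≤ 136 / n := by
  intro n hn
  obtain ⟨hAn, hCn, hACn, hK0, hP0, hQ0, hsum, hsA, hsC, hKr, hPr, hQr⟩ := facts hn
  have hn' : (100:ℝ) ≤ n := by exact_mod_cast hn
  have hn0 : (0:ℝ) < n := by linarith
  have h1 := hbA n hn; have h2 := hbC n hn; have h3 := hbP n hn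
  have h4 := hbQ n hn; have h5 := hbK n hn
  rw [abs_le] at h1 h2 h3 h4 h5
  have hmα : 0.7235 * (n:ℝ) ≤ αc * n := mul_le_mul_of_nonneg_right αc_gt.le hn0.le
  have hmβ : 0.2763 * (n:ℝ) ≤ βc * n := mul_le_mul_of_nonneg_right βc_gt.le hn0.le
  have hmκ : 0.447 * (n:ℝ) ≤ κ * n := mul_le_mul_of_nonneg_right κ_gt.le hn0.le
  have hA0 : (0:ℝ) < A n := by linarith [h1.1]
  have hC0 : (0:ℝ) < Cc n := by linarith [h2.1]
  have hP0' : (0:ℝ) < P n := by linarith [h3.1]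
  have hQ0' : (0:ℝ) < Q n := by linarith [h4.1]
  have hK0' : (0:ℝ) < K n := by linarith [h5.1]
  have hyA : 0.27 * (n:ℝ) ≤ αc * n := by linarith
  have hyB : 0.27 * (n:ℝ) ≤ βc * n := by linarith
  have hyK : 0.27 * (n:ℝ) ≤ κ * n := by linarith
  obtain ⟨lA, uA⟩ := Ubound hn' hyA hA0 (abs_le.mpr h1)
  obtain ⟨lC, uC⟩ := Ubound hn' hyA hC0 (abs_le.mpr h2)
  obtain ⟨lP, uP⟩ := Ubound hn' hyB hP0' (abs_le.mpr h3)
  obtain ⟨lQ, uQ⟩ := Ubound hn' hyB hQ0' (abs_le.mpr h4)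
  obtain ⟨lK, uK⟩ := Ubound hn' hyK hK0' (abs_le.mpr h5)
  have hαn0 : (0:ℝ) < αc * n := by linarith
  have hβn0 : (0:ℝ) < βc * n := by linarith
  have hκn0 : (0:ℝ) < κ * n := by linarith
  have hflipP : Real.log (βc * n / (P n : ℝ)) = -Real.log ((P n : ℝ) / (βc * n)) := by
    rw [← Real.log_inv]; congr 1; rw [inv_div]
  have hflipQ : Real.log (βc * n / (Q n : ℝ)) = -Real.log ((Q n : ℝ) / (βc * n)) := by
    rw [← Real.log_inv]; congr 1; rw [inv_div]
  have hflipK : Real.log (κ * n / (K n : ℝ)) = -Real.log ((K n : ℝ) / (κ * n)) := by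
    rw [← Real.log_inv]; congr 1; rw [inv_div]
  have hlin : ((A n : ℝ) - αc * n) + ((Cc n : ℝ) - αc * n) - ((P n : ℝ) - βc * n)
      - ((Q n : ℝ) - βc * n) - 2 * ((K n : ℝ) - κ * n) = 0 := by
    rw [hKr, hPr, hQr, hβα, hκα]; ring
  have hG : (A n : ℝ) * Real.log ((A n : ℝ) / (αc * n)) +
      (Cc n : ℝ) * Real.log ((Cc n : ℝ) / (αc * n)) +
      (P n : ℝ) * Real.log (βc * n / (P n : ℝ)) +
      (Q n : ℝ) * Real.log (βc * n / (Q n : ℝ)) +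
      2 * (K n : ℝ) * Real.log (κ * n / (K n : ℝ)) =
      ((A n : ℝ) * Real.log ((A n : ℝ) / (αc * n)) - ((A n : ℝ) - αc * n)) +
      ((Cc n : ℝ) * Real.log ((Cc n : ℝ) / (αc * n)) - ((Cc n : ℝ) - αc * n)) -
      ((P n : ℝ) * Real.log ((P n : ℝ) / (βc * n)) - ((P n : ℝ) - βc * n)) -
      ((Q n : ℝ) * Real.log ((Q n : ℝ) / (βc * n)) - ((Q n : ℝ) - βc * n)) -
      2 * ((K n : ℝ) * Real.log ((K n : ℝ) / (κ * n)) - ((K n : ℝ) - κ * n)) := by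
    rw [hflipP, hflipQ, hflipK]; linear_combination hlin
  have h136 : (136:ℝ) / n = 4 * (34 / n) := by ring
  rw [hG, abs_le, h136]
  constructor <;> linarith


def Gf (n : ℕ) : ℝ :=
  (A n : ℝ) * Real.log ((A n : ℝ) / (αc * n)) +
  (Cc n : ℝ) * Real.log ((Cc n : ℝ) / (αc * n)) +
  (P n : ℝ) * Real.log (βc * n / (P n : ℝ)) +
  (Q n : ℝ) * Real.log (βc * n / (Q n : ℝ)) +
  2 * (K n : ℝ) * Real.log (κ * n / (K n : ℝ))

lemma posf : ∀ n : ℕ, 100 ≤ n → (0:ℝ) < A n ∧ (0:ℝ) < Cc n ∧ (0:ℝ) < P n ∧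
    (0:ℝ) < Q n ∧ (0:ℝ) < K n ∧ (0:ℝ) < n := by
  intro n hn
  have hn' : (100:ℝ) ≤ n := by exact_mod_cast hn
  have hn0 : (0:ℝ) < n := by linarith
  have h1 := hbA n hn; have h2 := hbC n hn; have h3 := hbP n hn
  have h4 := hbQ n hn; have h5 := hbK n hn
  rw [abs_le] at h1 h2 h3 h4 h5
  have hmα : 0.7235 * (n:ℝ) ≤ αc * n := mul_le_mul_of_nonneg_right αc_gt.le hn0.le
  have hmβ : 0.2763 * (n:ℝ) ≤ βc * n := mul_le_mul_of_nonneg_right βc_gt.le hn0.le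
  have hmκ : 0.447 * (n:ℝ) ≤ κ * n := mul_le_mul_of_nonneg_right κ_gt.le hn0.le
  exact ⟨by linarith [h1.1], by linarith [h2.1], by linarith [h3.1],
    by linarith [h4.1], by linarith [h5.1], hn0⟩

lemma tA : Tendsto (fun n : ℕ => (A n : ℝ) / n) atTop (nhds αc) := tendsto_ratio hbA
lemma tC : Tendsto (fun n : ℕ => (Cc n : ℝ) / n) atTop (nhds αc) := tendsto_ratio hbC
lemma tP : Tendsto (fun n : ℕ => (P n : ℝ) / n) atTop (nhds βc) := tendsto_ratio hbP
lemma tQ : Tendsto (fun n : ℕ => (Q n : ℝ) / n) atTop (nhds βc) := tendsto_ratio hbQ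
lemma tK : Tendsto (fun n : ℕ => (K n : ℝ) / n) atTop (nhds κ) := tendsto_ratio hbK

lemma nA : Tendsto A atTop atTop := tendsto_nat_top αc_pos (fun n hn => by
  have h := hbA n hn; rw [abs_le] at h; linarith [h.1])
lemma nC : Tendsto Cc atTop atTop := tendsto_nat_top αc_pos (fun n hn => by
  have h := hbC n hn; rw [abs_le] at h; linarith [h.1])
lemma nP : Tendsto P atTop atTop := tendsto_nat_top βc_pos (fun n hn => by
  have h := hbP n hn; rw [abs_le] at h; linarith [h.1])
lemma nQ : Tendsto Q atTop atTop := tendsto_nat_top βc_pos (fun n hn => by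
  have h := hbQ n hn; rw [abs_le] at h; linarith [h.1])
lemma nK : Tendsto K atTop atTop := tendsto_nat_top κ_pos (fun n hn => by
  have h := hbK n hn; rw [abs_le] at h; linarith [h.1])

lemma tR : Tendsto (fun n : ℕ => Stirling.stirlingSeq (A n) * Stirling.stirlingSeq (Cc n) /
    (Stirling.stirlingSeq (P n) * Stirling.stirlingSeq (Q n) * Stirling.stirlingSeq (K n) ^ 2))
    atTop (nhds (Real.sqrt π * Real.sqrt π /
      (Real.sqrt π * Real.sqrt π * Real.sqrt π ^ 2))) := by
  have hS := Stirling.tendsto_stirlingSeq_sqrt_pi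
  have hd : Real.sqrt π * Real.sqrt π * Real.sqrt π ^ 2 ≠ 0 := by positivity
  exact ((hS.comp nA).mul (hS.comp nC)).div
    (((hS.comp nP).mul (hS.comp nQ)).mul ((hS.comp nK).pow 2)) hd

lemma tW : Tendsto (fun n : ℕ => ((n:ℝ) * (Real.sqrt (A n) * Real.sqrt (Cc n))) /
    (2 * (K n : ℝ) * (Real.sqrt (P n) * Real.sqrt (Q n)))) atTop
    (nhds ((1 / (2 * κ)) * (Real.sqrt (αc / βc) * Real.sqrt (αc / βc)))) := by
  have t1 : Tendsto (fun n : ℕ => (1:ℝ) / (2 * ((K n : ℝ)/n))) atTop (nhds (1 / (2 * κ))) :=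
    tendsto_const_nhds.div (tendsto_const_nhds.mul tK) (by nlinarith [κ_pos])
  have t2 : Tendsto (fun n : ℕ => Real.sqrt (((A n : ℝ)/n) / ((P n : ℝ)/n)) *
      Real.sqrt (((Cc n : ℝ)/n) / ((Q n : ℝ)/n))) atTop
      (nhds (Real.sqrt (αc/βc) * Real.sqrt (αc/βc))) :=
    ((tA.div tP βc_pos.ne').sqrt).mul ((tC.div tQ βc_pos.ne').sqrt)
  refine Tendsto.congr' ?_ (t1.mul t2)
  filter_upwards [eventually_ge_atTop 100] with n hn
  obtain ⟨hA0, hC0, hP0, hQ0, hK0, hn0⟩ := posf n hn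
  have e1 : ((A n : ℝ)/n) / ((P n : ℝ)/n) = (A n : ℝ) / (P n : ℝ) := by
    rw [div_div_div_comm, div_self hn0.ne', div_one]
  have e2 : ((Cc n : ℝ)/n) / ((Q n : ℝ)/n) = (Cc n : ℝ) / (Q n : ℝ) := by
    rw [div_div_div_comm, div_self hn0.ne', div_one]
  rw [e1, e2, Real.sqrt_div hA0.le, Real.sqrt_div hC0.le]
  have sP : (0:ℝ) < Real.sqrt (P n) := Real.sqrt_pos.mpr hP0
  have sQ : (0:ℝ) < Real.sqrt (Q n) := Real.sqrt_pos.mpr hQ0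
  field_simp

lemma tGlim : Tendsto Gf atTop (nhds 0) := by
  have tb : Tendsto (fun n : ℕ => 136/(n:ℝ)) atTop (nhds 0) := by
    simpa [div_eq_mul_inv] using tendsto_one_div_atTop_nhds_zero_nat.const_mul (136:ℝ)
  apply tendsto_of_tendsto_of_tendsto_of_le_of_le' (g := fun n : ℕ => -(136/(n:ℝ)))
    (h := fun n : ℕ => 136/(n:ℝ)) (by simpa using tb.neg) tb
  · filter_upwards [eventually_ge_atTop 100] with n hn
    have h := Gbound n hn; rw [abs_le] at h
    exact h.1
  · filter_upwards [eventually_ge_atTop 100] with n hn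
    have h := Gbound n hn; rw [abs_le] at h
    exact h.2

lemma tV : Tendsto (fun n : ℕ => Real.exp (Gf n)) atTop (nhds (Real.exp 0)) :=
  (Real.continuous_exp.tendsto 0).comp tGlim

lemma hconst : (Real.sqrt π * Real.sqrt π / (Real.sqrt π * Real.sqrt π * Real.sqrt π ^ 2)) *
    ((1 / (2 * κ)) * (Real.sqrt (αc / βc) * Real.sqrt (αc / βc))) * Real.exp 0 =
    φc ^ 2 * Real.sqrt 5 / (2 * Real.pi) := by
  have hπ := Real.pi_pos
  have hαβ : (0:ℝ) ≤ αc / βc := div_nonneg αc_pos.le βc_pos.le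
  rw [Real.exp_zero, Real.mul_self_sqrt hπ.le, Real.sq_sqrt hπ.le, Real.mul_self_sqrt hαβ]
  have hab : αc / βc = φc ^ 2 := by
    rw [αc_eq, βc_eq]
    field_simp [κ_pos.ne']
  have hκ5 : κ * Real.sqrt 5 = 1 := by
    rw [hκdef]; field_simp
  rw [hab]
  have hκ0 : κ ≠ 0 := κ_pos.ne'
  field_simp
  linear_combination (-(φc^2)) * hκ5

end Stmt15

end


theorem stmt15 :
    let φ : ℝ := (1 + Real.sqrt 5) / 2
    Filter.Tendsto
      (fun n : ℕ =>
        ((Nat.choose ⌊(1 / 2 : ℝ) * (1 + 1 / Real.sqrt 5) * ((n : ℝ) + 1)⌋₊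
              ⌈(5 * (n : ℝ) - 1 - Real.sqrt (5 * ((n : ℝ) + 1) ^ 2 - 4)) / 10⌉₊ *
            Nat.choose ⌊(5 * (n : ℝ) + 1 + Real.sqrt (5 * ((n : ℝ) + 1) ^ 2 - 4)) / 10⌋₊
              ⌊(1 / 2 : ℝ) * (1 - 1 / Real.sqrt 5) * ((n : ℝ) + 1)⌋₊ : ℝ) *
          (n : ℝ)) / φ ^ (2 * n))
      Filter.atTop (nhds (φ ^ 2 * Real.sqrt 5 / (2 * Real.pi))) := by
  intro φ
  have hφ : φ = Stmt15.φc := rfl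
  rw [hφ]
  have hlimF := (Stmt15.tR.mul Stmt15.tW).mul Stmt15.tV
  rw [Stmt15.hconst] at hlimF
  refine Filter.Tendsto.congr' ?_ hlimF
  filter_upwards [Filter.eventually_ge_atTop 100] with n hn
  obtain ⟨hAn, hCn, hACn, hK0, hP0, hQ0, hsum, hsA, hsC, hKr, hPr, hQr⟩ := Stmt15.facts hn
  have hkey := Stmt15.key_identity (Stmt15.K n) (Stmt15.P n) (Stmt15.Q n) n hK0 hP0 hQ0 hsum
  rw [Nat.cast_mul] at hkey
  unfold Stmt15.Gf
  rw [Stmt15.ceilQ hn, Stmt15.floorP hn, Stmt15.A_def, Stmt15.Cc_def, Stmt15.P_def, Stmt15.Q_def, hsA, hsC]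
  push_cast at hkey ⊢
  rw [hkey]
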